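/- Constant mechanisms dominate for concave tradeoffs (core of Lemma 3.10): Let h : ℝ → ℝ ∪ {−∞} be concave, let v be a random variable with density f supported in [0, h̄] with E[v] > 0, and let (x, p) be an incentive compatible single-period mechanism (x(v) ∈ [0,1], and v x(v) − p(v) ≥ v x(v') − p(v') for all v, v') with expected utility c := E[v x(v) − p(v)]. Then Y := (c + p(0))/E[v] satisfies 0 ≤ Y ≤ 1, the constant mechanism with allocation Y and payment Q := p(0) has expected utility E[v Y − Q] = c, and E[h(v Y − Q)] ≥ E[h(v x(v) − p(v))]. -/

import Mathlib

/-!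
Core of Lemma 3.10 (constant mechanisms dominate for concave tradeoffs): for a
concave `h : ℝ → ℝ ∪ {-∞}`, a value distribution with density `f` supported in
`[0, h̄]` with positive mean, and an IC single-period mechanism `(x, p)` with
expected utility `c`, the constant mechanism offering allocation
`Y = (c + p(0))/E[v]` at constant payment `Q = p(0)` is well defined
(`Y ∈ [0,1]`), has expected utility `c`, and satisfies
`E[h(v Y - Q)] ≥ E[h(v x(v) - p(v))]`.
-/

open MeasureTheory

namespace Stmt8

open scoped Classical

/-- Expectation of an extended-real-valued function, with value `⊥` when the
function is not a.e. finite and integrable. -/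
noncomputable def eExp (μ : Measure ℝ) (φ : ℝ → EReal) : EReal :=
  if (∀ᵐ v ∂μ, ⊥ < φ v ∧ φ v < ⊤) ∧ Integrable (fun v => (φ v).toReal) μ then
    ((∫ v, (φ v).toReal ∂μ : ℝ) : EReal)
  else ⊥

/-- Concavity of an extended-real-valued function. -/
def EConcave (h : ℝ → EReal) : Prop :=
  ∀ (u₁ u₂ a b : ℝ), 0 ≤ a → 0 ≤ b → a + b = 1 →
    (a : EReal) * h u₁ + (b : EReal) * h u₂ ≤ h (a * u₁ + b * u₂)

end Stmt8

namespace Stmt8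

/-- `eExp` only depends on the a.e. class of the integrand. -/
theorem eExp_congr {μ : Measure ℝ} {φ ψ : ℝ → EReal} (hfg : φ =ᵐ[μ] ψ) :
    eExp μ φ = eExp μ ψ := by
  have hiff : (∀ᵐ v ∂μ, ⊥ < φ v ∧ φ v < ⊤) ↔ (∀ᵐ v ∂μ, ⊥ < ψ v ∧ ψ v < ⊤) :=
    Filter.eventually_congr (hfg.mono fun v hv => by rw [hv])
  have hint : Integrable (fun v => (φ v).toReal) μ ↔ Integrable (fun v => (ψ v).toReal) μ :=
    integrable_congr (hfg.mono fun v hv => by simp only [hv])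
  have hval : ∫ v, (φ v).toReal ∂μ = ∫ v, (ψ v).toReal ∂μ :=
    integral_congr_ae (hfg.mono fun v hv => by simp only [hv])
  by_cases hcnd : (∀ᵐ v ∂μ, ⊥ < φ v ∧ φ v < ⊤) ∧ Integrable (fun v => (φ v).toReal) μ
  · rw [eExp, eExp, if_pos hcnd, if_pos ⟨hiff.1 hcnd.1, hint.1 hcnd.2⟩, hval]
  · rw [eExp, eExp, if_neg hcnd, if_neg (fun hc2 => hcnd ⟨hiff.2 hc2.1, hint.2 hc2.2⟩)]

end Stmt8

set_option maxHeartbeats 2000000 in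
open Stmt8 in
/-- **Core of Lemma 3.10** (a constant mechanism with the same expected utility
dominates in terms of any concave tradeoff objective). -/
theorem stmt_8 (h : ℝ → EReal) (hconc : EConcave h)
    (hbar : ℝ) (hbar0 : 0 ≤ hbar)
    (f : ℝ → ℝ) (hf : ∀ v, 0 ≤ f v)
    (hfsupp : ∀ v, v ∉ Set.Icc 0 hbar → f v = 0)
    (μ : Measure ℝ)
    (hμ : μ = MeasureTheory.volume.withDensity (fun v => ENNReal.ofReal (f v)))
    (hprob : IsProbabilityMeasure μ)
    (hmean : 0 < ∫ v, v ∂μ)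
    (x p : ℝ → ℝ)
    (hx : ∀ v, x v ∈ Set.Icc (0 : ℝ) 1)
    (hIC : ∀ v ∈ Set.Icc 0 hbar, ∀ v' ∈ Set.Icc 0 hbar,
        v * x v' - p v' ≤ v * x v - p v)
    (c : ℝ) (hc : c = ∫ v, (v * x v - p v) ∂μ)
    (Y Q : ℝ) (hY : Y = (c + p 0) / ∫ v, v ∂μ) (hQ : Q = p 0) :
    0 ≤ Y ∧ Y ≤ 1
    ∧ (∫ v, (v * Y - Q) ∂μ) = c
    ∧ eExp μ (fun v => h (v * x v - p v)) ≤ eExp μ (fun v => h (v * Y - Q)) := by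
  classical
  -- utility of the mechanism and of the constant mechanism
  obtain ⟨u, hu⟩ : ∃ u : ℝ → ℝ, u = fun v => v * x v - p v := ⟨_, rfl⟩
  obtain ⟨L, hL⟩ : ∃ L : ℝ → ℝ, L = fun v => v * Y - Q := ⟨_, rfl⟩
  have habs : μ ≪ volume := by
    rw [hμ]; exact withDensity_absolutelyContinuous _ _
  have hμne : μ ≠ 0 := IsProbabilityMeasure.ne_zero μ
  haveI hne : (ae μ).NeBot := ae_neBot.2 hμne
  -- a.e. support
  have hae_mem : ∀ᵐ v ∂μ, v ∈ Set.Icc 0 hbar := by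
    have hz : μ (Set.Icc (0:ℝ) hbar)ᶜ = 0 := by
      rw [hμ, withDensity_apply _ measurableSet_Icc.compl]
      have : ∀ v ∈ (Set.Icc (0:ℝ) hbar)ᶜ, ENNReal.ofReal (f v) = 0 := by
        intro v hv; simp [hfsupp v hv]
      rw [setLIntegral_congr_fun measurableSet_Icc.compl this]
      simp
    exact measure_eq_zero_iff_ae_notMem.1 hz |>.mono fun v hv => not_not.1 hv
  have hsing : ∀ r : ℝ, μ {r} = 0 := fun r => habs Real.volume_singleton
  have h0mem : (0:ℝ) ∈ Set.Icc 0 hbar := ⟨le_refl _, hbar0⟩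
  have hu0 : u 0 = -p 0 := by rw [hu]; simp
  -- basic pointwise bounds from incentive compatibility
  have hp0 : ∀ v ∈ Set.Icc 0 hbar, p 0 ≤ p v := by
    intro v hv
    have := hIC 0 h0mem v hv
    simp only [zero_mul, zero_sub] at this
    linarith
  have hul : ∀ v ∈ Set.Icc 0 hbar, u 0 ≤ u v := by
    intro v hv
    have h1 := hIC v hv 0 h0mem
    have h2 : 0 ≤ v * x 0 := mul_nonneg hv.1 (hx 0).1
    have h3 : u v = v * x v - p v := by rw [hu]
    rw [hu0, h3]; linarith
  have huu : ∀ v ∈ Set.Icc 0 hbar, u v ≤ v + u 0 := by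
    intro v hv
    have h1 := hp0 v hv
    have h2 : v * x v ≤ v := by
      have := (hx v).2
      nlinarith [hv.1]
    have h3 : u v = v * x v - p v := by rw [hu]
    rw [hu0, h3]; linarith
  -- convexity of `u` on `[0, hbar]`
  have hconv : ∀ v₁ ∈ Set.Icc (0:ℝ) hbar, ∀ v₂ ∈ Set.Icc (0:ℝ) hbar,
      ∀ a b : ℝ, 0 ≤ a → 0 ≤ b → a + b = 1 →
      u (a * v₁ + b * v₂) ≤ a * u v₁ + b * u v₂ := by
    intro v₁ hv₁ v₂ hv₂ a b ha hb hab
    obtain ⟨V, hV⟩ : ∃ V, V = a * v₁ + b * v₂ := ⟨_, rfl⟩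
    rw [← hV]
    have hVmem : V ∈ Set.Icc (0:ℝ) hbar := by
      constructor
      · have := mul_nonneg ha hv₁.1
        have := mul_nonneg hb hv₂.1
        simp only [hV]; linarith
      · have h1 : a * v₁ ≤ a * hbar := mul_le_mul_of_nonneg_left hv₁.2 ha
        have h2 : b * v₂ ≤ b * hbar := mul_le_mul_of_nonneg_left hv₂.2 hb
        simp only [hV]; nlinarith
    have e1 := mul_le_mul_of_nonneg_left (hIC v₁ hv₁ V hVmem) ha
    have e2 := mul_le_mul_of_nonneg_left (hIC v₂ hv₂ V hVmem) hb
    have h3 : u V = V * x V - p V := by rw [hu]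
    have h4 : u v₁ = v₁ * x v₁ - p v₁ := by rw [hu]
    have h5 : u v₂ = v₂ * x v₂ - p v₂ := by rw [hu]
    have key : a * (v₁ * x V - p V) + b * (v₂ * x V - p V)
        = (a * v₁ + b * v₂) * x V - (a + b) * p V := by ring
    rw [h3, h4, h5]
    rw [hab] at key
    rw [← hV] at key
    linarith [e1, e2]
  -- monotonicity of `u` on `[0, hbar]`
  have hmono : ∀ v₁ ∈ Set.Icc (0:ℝ) hbar, ∀ v₂ ∈ Set.Icc (0:ℝ) hbar,
      v₁ ≤ v₂ → u v₁ ≤ u v₂ := by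
    intro v₁ hv₁ v₂ hv₂ h12
    rcases eq_or_lt_of_le h12 with rfl | hlt
    · exact le_refl _
    rcases eq_or_lt_of_le hv₁.1 with h0 | h0
    · rw [← h0]; exact hul v₂ hv₂
    have hv₂pos : 0 < v₂ := lt_trans h0 hlt
    set t := v₁ / v₂ with htdef
    have ht0 : 0 < t := div_pos h0 hv₂pos
    have ht1 : t < 1 := (div_lt_one hv₂pos).2 hlt
    have hcomb := hconv 0 h0mem v₂ hv₂ (1 - t) t (by linarith) (by linarith) (by ring)
    have heq : (1 - t) * 0 + t * v₂ = v₁ := by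
      rw [htdef, mul_zero, zero_add]; exact div_mul_cancel₀ _ (ne_of_gt hv₂pos)
    rw [heq] at hcomb
    have h6 := hul v₂ hv₂
    nlinarith [mul_le_mul_of_nonneg_left h6 (by linarith : (0:ℝ) ≤ 1 - t)]
  -- measurable monotone representative of `u`
  obtain ⟨U, hUdef⟩ : ∃ U : ℝ → ℝ, U = fun v => u (max 0 (min v hbar)) := ⟨_, rfl⟩
  have hUmono : Monotone U := by
    intro a b hab
    rw [hUdef]
    have hmem : ∀ w : ℝ, max 0 (min w hbar) ∈ Set.Icc (0:ℝ) hbar := by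
      intro w
      exact ⟨le_max_left _ _, max_le hbar0 (min_le_right _ _)⟩
    exact hmono _ (hmem a) _ (hmem b)
      (max_le_max (le_refl 0) (min_le_min hab (le_refl hbar)))
  have hUae : u =ᵐ[μ] U := by
    filter_upwards [hae_mem] with v hv
    have heq9 : max 0 (min v hbar) = v := by
      rw [min_eq_left hv.2, max_eq_right hv.1]
    rw [hUdef]
    simp only [heq9]
  have husm : AEStronglyMeasurable u μ :=
    (hUmono.measurable.aestronglyMeasurable).congr hUae.symm
  have huInt : Integrable u μ := by
    refine Integrable.mono' (integrable_const (|u 0| + hbar)) husm ?_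
    filter_upwards [hae_mem] with v hv
    rw [Real.norm_eq_abs, abs_le]
    have h1 := hul v hv
    have h2 := huu v hv
    constructor
    · have := abs_nonneg (u 0); have := neg_abs_le (u 0); linarith
    · have := le_abs_self (u 0); linarith [hv.2]
  have hvInt : Integrable (fun v : ℝ => v) μ := by
    refine Integrable.mono' (integrable_const hbar) aestronglyMeasurable_id ?_
    filter_upwards [hae_mem] with v hv
    rw [Real.norm_eq_abs, abs_le]; exact ⟨by linarith [hv.1, hbar0], hv.2⟩
  have hLInt : Integrable L μ := by
    rw [hL]; exact (hvInt.mul_const Y).sub (integrable_const Q)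
  have huc : ∫ v, u v ∂μ = c := by rw [hu]; exact hc.symm
  have hmuuniv : (μ Set.univ).toReal = 1 := by simp
  have hconst_int : ∀ r : ℝ, ∫ _ : ℝ, r ∂μ = r := by
    intro r; rw [integral_const]; simp
  have hu0c : u 0 ≤ c := by
    rw [← huc, ← hconst_int (u 0)]
    exact integral_mono_ae (integrable_const _) huInt (hae_mem.mono fun v hv => hul v hv)
  have hcEv : c ≤ (∫ v, v ∂μ) + u 0 := by
    rw [← huc]
    have : ∫ v, (v + u 0) ∂μ = (∫ v, v ∂μ) + u 0 := by
      rw [integral_add hvInt (integrable_const _), hconst_int]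
    rw [← this]
    exact integral_mono_ae huInt (hvInt.add (integrable_const _))
      (hae_mem.mono fun v hv => huu v hv)
  have hp0u : p 0 = - u 0 := by rw [hu0]; ring
  have hYnn : 0 ≤ Y := by
    rw [hY, hp0u]; exact div_nonneg (by linarith) hmean.le
  have hY1 : Y ≤ 1 := by
    rw [hY, hp0u, div_le_one hmean]; linarith
  have hLc : ∫ v, L v ∂μ = c := by
    have h1 : ∫ v, L v ∂μ = (∫ v, v ∂μ) * Y - Q := by
      simp only [hL]
      rw [integral_sub (hvInt.mul_const Y) (integrable_const Q), integral_mul_const,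
        hconst_int]
    rw [h1, hY, hp0u, hQ, hp0u]
    field_simp; ring
  refine ⟨hYnn, hY1, by simpa only [hL] using hLc, ?_⟩
  -- rewrite the goal in terms of `u` and `L`
  have hrw1 : (fun v : ℝ => h (v * x v - p v)) = fun v => h (u v) := by
    funext v; rw [hu]
  have hrw2 : (fun v : ℝ => h (v * Y - Q)) = fun v => h (L v) := by
    funext v; rw [hL]
  rw [hrw1, hrw2]
  by_cases hm : (∀ᵐ v ∂μ, ⊥ < h (u v) ∧ h (u v) < ⊤) ∧
      Integrable (fun v => (h (u v)).toReal) μ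
  swap
  · have : eExp μ (fun v => h (u v)) = ⊥ := by rw [eExp, if_neg hm]
    rw [this]; exact bot_le
  obtain ⟨hfin, hint⟩ := hm
  -- if the two utility profiles agree a.e., we are done
  have heqcase : u =ᵐ[μ] L → eExp μ (fun v => h (u v)) ≤ eExp μ (fun v => h (L v)) := by
    intro he
    exact le_of_eq (eExp_congr (he.mono fun v hv => by simp only [hv]))
  -- case: `u` is a.e. constant (then the constant must be `c` and `Y = 0`)
  by_cases hconst : u =ᵐ[μ] fun _ => c
  · -- two points with value `c`, convexity forces `u 0 = c`, hence `Y = 0`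
    have hSae : ∀ᵐ v ∂μ, v ∈ {w : ℝ | w ∈ Set.Ioc 0 hbar ∧ u w = c} := by
      have h0 : ∀ᵐ v ∂μ, v ≠ (0:ℝ) := measure_eq_zero_iff_ae_notMem.1 (hsing 0)
      filter_upwards [hae_mem, hconst, h0] with v h1 h2 h3
      exact ⟨⟨lt_of_le_of_ne h1.1 (Ne.symm h3), h1.2⟩, h2⟩
    have hvol : volume {w : ℝ | w ∈ Set.Ioc 0 hbar ∧ u w = c} ≠ 0 := by
      intro h0
      have hμ0 : μ {w : ℝ | w ∈ Set.Ioc 0 hbar ∧ u w = c} = 0 := habs h0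
      have := (measure_eq_zero_iff_ae_notMem.1 hμ0).and hSae
      obtain ⟨v, hv1, hv2⟩ := this.exists
      exact hv1 hv2
    have hnontriv : Set.Nontrivial {w : ℝ | w ∈ Set.Ioc 0 hbar ∧ u w = c} := by
      by_contra hns
      rw [Set.not_nontrivial_iff] at hns
      exact hvol (hns.measure_zero _)
    obtain ⟨v₁, hv₁, v₂, hv₂, hvne⟩ := hnontriv
    -- order the two points
    have hkey : ∀ a b : ℝ, a ∈ Set.Ioc 0 hbar → b ∈ Set.Ioc 0 hbar → a < b →
        u a = c → u b = c → c ≤ u 0 := by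
      intro a b haI hbI hab hua hub
      have ht0 : 0 < a / b := div_pos haI.1 (lt_trans haI.1 hab)
      have hbpos : 0 < b := lt_trans haI.1 hab
      have ht1 : a / b < 1 := (div_lt_one hbpos).2 hab
      have hcomb := hconv 0 h0mem b ⟨hbpos.le, hbI.2⟩ (1 - a / b) (a / b)
        (by linarith) (by linarith) (by ring)
      have heq : (1 - a / b) * 0 + a / b * b = a := by field_simp; ring
      rw [heq, hua, hub] at hcomb
      nlinarith
    have hu0eq : u 0 = c := by
      rcases lt_or_gt_of_ne hvne with hlt | hgt
      · exact le_antisymm hu0c (hkey v₁ v₂ hv₁.1 hv₂.1 hlt hv₁.2 hv₂.2)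
      · exact le_antisymm hu0c (hkey v₂ v₁ hv₂.1 hv₁.1 hgt hv₂.2 hv₁.2)
    have hY0 : Y = 0 := by
      rw [hY, hp0u, hu0eq]; simp
    have hLconst : ∀ v, L v = c := by
      intro v; simp only [hL, hY0, hQ, hp0u, hu0eq]; ring
    exact heqcase (hconst.mono fun v hv => by rw [hv, hLconst v])
  -- now `u` is not a.e. constant; in particular `Y > 0`
  have hY0 : 0 < Y := by
    rcases eq_or_lt_of_le hYnn with h0 | h0
    · exfalso
      have hcu0 : c = u 0 := by
        have : (c + p 0) / (∫ v, v ∂μ) = 0 := by rw [← hY, ← h0]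
        rw [div_eq_zero_iff] at this
        rcases this with h1 | h1
        · rw [hp0u] at h1; linarith
        · exact absurd h1 (ne_of_gt hmean)
      apply hconst
      have hnn : ∀ᵐ v ∂μ, 0 ≤ u v - u 0 := hae_mem.mono fun v hv => by
        linarith [hul v hv]
      have hInt0 : Integrable (fun v => u v - u 0) μ := huInt.sub (integrable_const _)
      have hI0 : ∫ v, (u v - u 0) ∂μ = 0 := by
        rw [integral_sub huInt (integrable_const _), hconst_int, huc, hcu0]; ring
      have := (integral_eq_zero_iff_of_nonneg_ae hnn hInt0).1 hI0
      filter_upwards [this] with v hv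
      have : u v - u 0 = 0 := hv
      simp only [← hcu0] at *
      linarith
    exact h0
  -- the crossing point of `u` and `L`
  obtain ⟨SS, hSS⟩ : ∃ SS : Set ℝ, SS = {w | w ∈ Set.Icc 0 hbar ∧ u w ≤ L w} := ⟨_, rfl⟩
  have hSSmem : ∀ w, w ∈ SS ↔ (w ∈ Set.Icc 0 hbar ∧ u w ≤ L w) := fun w => by rw [hSS]; rfl
  have hL0 : L 0 = u 0 := by simp only [hL]; rw [hu0, hQ]; ring
  have hSS0 : (0:ℝ) ∈ SS := (hSSmem 0).2 ⟨h0mem, le_of_eq hL0.symm⟩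
  have hSSne : SS.Nonempty := ⟨0, hSS0⟩
  have hSSbdd : BddAbove SS := ⟨hbar, fun w hw => ((hSSmem w).1 hw).1.2⟩
  obtain ⟨bb, hbbdef⟩ : ∃ b, b = sSup SS := ⟨_, rfl⟩
  have hbb0 : 0 ≤ bb := hbbdef ▸ le_csSup hSSbdd hSS0
  have hbbh : bb ≤ hbar := hbbdef ▸ csSup_le hSSne fun w hw => ((hSSmem w).1 hw).1.2
  have hLmono : ∀ a b : ℝ, a < b → L a < L b := by
    intro a b hab
    have : a * Y < b * Y := mul_lt_mul_of_pos_right hab hY0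
    simp only [hL]; linarith
  have hcross₁ : ∀ v ∈ Set.Icc (0:ℝ) hbar, bb < v → L v < u v := by
    intro v hv hbv
    by_contra hcon
    push_neg at hcon
    exact absurd (hbbdef ▸ le_csSup hSSbdd ((hSSmem v).2 ⟨hv, hcon⟩)) (not_le.2 hbv)
  have hcross₂ : ∀ v ∈ Set.Icc (0:ℝ) hbar, v < bb → u v ≤ L v := by
    intro v hv hvb
    by_contra hcon
    push_neg at hcon
    obtain ⟨w, hwS', hvw⟩ := exists_lt_of_lt_csSup hSSne (hbbdef ▸ hvb)
    have hwS := (hSSmem w).1 hwS'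
    rcases eq_or_lt_of_le hv.1 with h0 | h0
    · rw [← h0, hL0] at hcon; exact lt_irrefl _ hcon
    have hwpos : 0 < w := lt_trans h0 hvw
    have ht1 : v / w < 1 := (div_lt_one hwpos).2 hvw
    have ht0 : 0 < v / w := div_pos h0 hwpos
    have hcomb := hconv 0 h0mem w hwS.1 (1 - v / w) (v / w) (by linarith) (by linarith)
      (by ring)
    have heqv : (1 - v / w) * 0 + v / w * w = v := by field_simp; ring
    rw [heqv] at hcomb
    have hla : L v = (1 - v / w) * L 0 + (v / w) * L w := by
      simp only [hL]; field_simp; ring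
    rw [hL0] at hla
    have huw := hwS.2
    have := mul_le_mul_of_nonneg_left huw ht0.le
    linarith
  -- the a.e. good set
  have hG : ∀ᵐ v ∂μ, v ∈ Set.Ioc 0 hbar ∧ (⊥ < h (u v) ∧ h (u v) < ⊤) ∧ v ≠ bb := by
    have h0 : ∀ᵐ v ∂μ, v ≠ (0:ℝ) := measure_eq_zero_iff_ae_notMem.1 (hsing 0)
    have hb : ∀ᵐ v ∂μ, v ≠ bb := measure_eq_zero_iff_ae_notMem.1 (hsing bb)
    filter_upwards [hae_mem, hfin, h0, hb] with v h1 h2 h3 h4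
    exact ⟨⟨lt_of_le_of_ne h1.1 (Ne.symm h3), h1.2⟩, h2, h4⟩
  -- picking points from positive-measure sets inside the good set
  have hpick : ∀ A : Set ℝ, μ A ≠ 0 → ∃ v, v ∈ A ∧
      (v ∈ Set.Ioc 0 hbar ∧ (⊥ < h (u v) ∧ h (u v) < ⊤) ∧ v ≠ bb) := by
    intro A hA
    have hN := ae_iff.1 hG
    have hd : μ (A \ {v | ¬(v ∈ Set.Ioc 0 hbar ∧ (⊥ < h (u v) ∧ h (u v) < ⊤) ∧ v ≠ bb)})
        = μ A := measure_diff_null hN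
    obtain ⟨v, hvA, hvG⟩ := nonempty_of_measure_ne_zero (by rw [hd]; exact hA)
    exact ⟨v, hvA, not_not.1 hvG⟩
  by_cases htop : ∃ t, h t = ⊤
  · -- `h` takes the value `⊤` somewhere: then good values collapse, contradiction
    exfalso
    obtain ⟨t₀, ht₀⟩ := htop
    have hR : ∀ a b t : ℝ, 0 < a → 0 < b → a + b = 1 → ⊥ < h t →
        h (a * t₀ + b * t) = ⊤ := by
      intro a b t ha hb hab hht
      have hkey := hconc t₀ t a b ha.le hb.le hab
      have h1 : (a : EReal) * h t₀ = ⊤ := by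
        rw [ht₀]; exact EReal.coe_mul_top_of_pos ha
      have h2 : (b : EReal) * h t ≠ ⊥ := by
        by_cases hT : h t = ⊤
        · rw [hT, EReal.coe_mul_top_of_pos hb]; exact top_ne_bot
        · have hcoe := EReal.coe_toReal hT (ne_of_gt hht)
          rw [← hcoe, ← EReal.coe_mul]; exact EReal.coe_ne_bot _
      rw [h1, EReal.top_add_of_ne_bot h2] at hkey
      exact top_le_iff.1 hkey
    have hR' : ∀ t s : ℝ, ⊥ < h t → min t₀ t < s → s < max t₀ t → h s = ⊤ := by
      intro t s ht hmin hmax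
      rcases lt_trichotomy t₀ t with hh | hh | hh
      · rw [min_eq_left hh.le] at hmin
        rw [max_eq_right hh.le] at hmax
        have hd : (0:ℝ) < t - t₀ := by linarith
        have hs := hR ((t - s)/(t - t₀)) ((s - t₀)/(t - t₀)) t
          (div_pos (by linarith) hd) (div_pos (by linarith) hd) (by field_simp; ring) ht
        have heqs : (t - s)/(t - t₀) * t₀ + (s - t₀)/(t - t₀) * t = s := by
          field_simp; ring
        rw [heqs] at hs; exact hs
      · exfalso; rw [hh] at hmin hmax; simp at hmin hmax; linarith
      · rw [min_eq_right hh.le] at hmin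
        rw [max_eq_left hh.le] at hmax
        have hd : (0:ℝ) < t₀ - t := by linarith
        have hs := hR ((s - t)/(t₀ - t)) ((t₀ - s)/(t₀ - t)) t
          (div_pos (by linarith) hd) (div_pos (by linarith) hd) (by field_simp; ring) ht
        have heqs : (s - t)/(t₀ - t) * t₀ + (t₀ - s)/(t₀ - t) * t = s := by
          field_simp; ring
        rw [heqs] at hs; exact hs
    have hpair : ∀ γ₁ γ₂ : ℝ, ⊥ < h γ₁ → h γ₁ ≠ ⊤ → ⊥ < h γ₂ → h γ₂ ≠ ⊤ → γ₁ < γ₂ →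
        γ₁ < t₀ ∧ t₀ < γ₂ := by
      intro γ₁ γ₂ h1b h1t h2b h2t hlt
      constructor
      · by_contra hle
        push_neg at hle
        rcases eq_or_lt_of_le hle with heq | hlt2
        · exact h1t (heq ▸ ht₀)
        · exact h1t (hR' γ₂ γ₁ h2b (lt_of_le_of_lt (min_le_left _ _) hlt2)
            (lt_of_lt_of_le hlt (le_max_right _ _)))
      · by_contra hle
        push_neg at hle
        rcases eq_or_lt_of_le hle with heq | hlt2
        · exact h2t (heq.symm ▸ ht₀)
        · exact h2t (hR' γ₁ γ₂ h1b (lt_of_le_of_lt (min_le_right _ _) hlt)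
            (lt_of_lt_of_le hlt2 (le_max_left _ _)))
    -- both strict sides of the mean have positive measure
    have hmeanside : ∀ s : ℝ → ℝ, (∀ᵐ v ∂μ, 0 ≤ s v) → Integrable s μ →
        ∫ v, s v ∂μ = 0 → ∀ᵐ v ∂μ, s v = 0 := by
      intro s h1 h2 h3
      exact (integral_eq_zero_iff_of_nonneg_ae h1 h2).1 h3
    have hneg : μ {v | u v < c} ≠ 0 := by
      intro h0
      apply hconst
      have hge : ∀ᵐ v ∂μ, c ≤ u v :=
        (measure_eq_zero_iff_ae_notMem.1 h0).mono fun v hv => not_lt.1 hv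
      have hz := hmeanside (fun v => u v - c) (hge.mono fun v hv => by show (0:ℝ) ≤ u v - c; linarith)
        (huInt.sub (integrable_const _))
        (by rw [integral_sub huInt (integrable_const _), hconst_int, huc]; ring)
      filter_upwards [hz] with v hv
      have : u v - c = 0 := hv
      linarith
    have hpos : μ {v | c < u v} ≠ 0 := by
      intro h0
      apply hconst
      have hge : ∀ᵐ v ∂μ, u v ≤ c :=
        (measure_eq_zero_iff_ae_notMem.1 h0).mono fun v hv => not_lt.1 hv
      have hz := hmeanside (fun v => c - u v) (hge.mono fun v hv => by show (0:ℝ) ≤ c - u v; linarith)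
        ((integrable_const _).sub huInt)
        (by rw [integral_sub (integrable_const _) huInt, hconst_int, huc]; ring)
      filter_upwards [hz] with v hv
      have : c - u v = 0 := hv
      linarith
    obtain ⟨v₁, hv₁A, hv₁G⟩ := hpick {v | u v < c} hneg
    obtain ⟨v₂, hv₂A, hv₂G⟩ := hpick {v | c < u v} hpos
    have hv₁A' : u v₁ < c := hv₁A
    have hv₂A' : c < u v₂ := hv₂A
    have hγlt : u v₁ < u v₂ := lt_trans hv₁A' hv₂A'
    have hγpair := hpair (u v₁) (u v₂) hv₁G.2.1.1 (ne_of_lt hv₁G.2.1.2)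
      hv₂G.2.1.1 (ne_of_lt hv₂G.2.1.2) hγlt
    -- every good value is `u v₁` or `u v₂`
    have hvals : ∀ v, (v ∈ Set.Ioc 0 hbar ∧ (⊥ < h (u v) ∧ h (u v) < ⊤) ∧ v ≠ bb) →
        u v = u v₁ ∨ u v = u v₂ := by
      intro v hvG'
      by_contra hcon
      push_neg at hcon
      obtain ⟨hne1, hne2⟩ := hcon
      have hbv := hvG'.2.1.1
      have htv := ne_of_lt hvG'.2.1.2
      rcases lt_trichotomy (u v) (u v₁) with hlt | heq | hgt
      · have hh := hpair (u v) (u v₁) hbv htv hv₁G.2.1.1 (ne_of_lt hv₁G.2.1.2) hlt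
        linarith [hγpair.1, hh.2]
      · exact hne1 heq
      · rcases lt_trichotomy (u v) (u v₂) with hlt2 | heq2 | hgt2
        · have hA := hpair (u v₁) (u v) hv₁G.2.1.1 (ne_of_lt hv₁G.2.1.2) hbv htv hgt
          have hB := hpair (u v) (u v₂) hbv htv hv₂G.2.1.1 (ne_of_lt hv₂G.2.1.2) hlt2
          linarith [hA.2, hB.1]
        · exact hne2 heq2
        · have hh := hpair (u v₂) (u v) hv₂G.2.1.1 (ne_of_lt hv₂G.2.1.2) hbv htv hgt2
          linarith [hγpair.2, hh.1]
    -- the upper-value set has positive measure, hence two points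
    have hS2 : μ {v | (v ∈ Set.Ioc 0 hbar ∧ (⊥ < h (u v) ∧ h (u v) < ⊤) ∧ v ≠ bb)
        ∧ c < u v} ≠ 0 := by
      intro h0
      apply hpos
      have hd : μ ({v | c < u v} \
          {v | ¬(v ∈ Set.Ioc 0 hbar ∧ (⊥ < h (u v) ∧ h (u v) < ⊤) ∧ v ≠ bb)})
          = μ {v | c < u v} := measure_diff_null (ae_iff.1 hG)
      have hsub : {v | c < u v} \
          {v | ¬(v ∈ Set.Ioc 0 hbar ∧ (⊥ < h (u v) ∧ h (u v) < ⊤) ∧ v ≠ bb)} ⊆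
          {v | (v ∈ Set.Ioc 0 hbar ∧ (⊥ < h (u v) ∧ h (u v) < ⊤) ∧ v ≠ bb) ∧ c < u v} :=
        fun v hv => ⟨not_not.1 hv.2, hv.1⟩
      rw [← hd]
      exact le_antisymm (le_trans (measure_mono hsub) (le_of_eq h0)) zero_le
    have hvol2 : volume {v | (v ∈ Set.Ioc 0 hbar ∧ (⊥ < h (u v) ∧ h (u v) < ⊤) ∧ v ≠ bb)
        ∧ c < u v} ≠ 0 := fun h0 => hS2 (habs h0)
    have hnt : Set.Nontrivial {v | (v ∈ Set.Ioc 0 hbar ∧ (⊥ < h (u v) ∧ h (u v) < ⊤)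
        ∧ v ≠ bb) ∧ c < u v} := by
      by_contra hns
      rw [Set.not_nontrivial_iff] at hns
      exact hvol2 (hns.measure_zero _)
    obtain ⟨w₁, hw₁, w₂, hw₂, hwne⟩ := hnt
    have hval : ∀ w, ((w ∈ Set.Ioc 0 hbar ∧ (⊥ < h (u w) ∧ h (u w) < ⊤) ∧ w ≠ bb)
        ∧ c < u w) → u w = u v₂ := by
      intro w hw
      rcases hvals w hw.1 with h9 | h9
      · exfalso; have := hw.2; rw [h9] at this; linarith
      · exact h9
    -- convexity contradiction: low point `v₁`, two high points
    have hfinal : ∀ a b : ℝ, a ∈ Set.Ioc (0:ℝ) hbar → b ∈ Set.Ioc (0:ℝ) hbar → a < b →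
        u a = u v₂ → u b = u v₂ → False := by
      intro a b haI hbI hab hua hub
      have hva : v₁ < a := by
        by_contra hcon
        push_neg at hcon
        have := hmono a ⟨haI.1.le, haI.2⟩ v₁ ⟨hv₁G.1.1.le, hv₁G.1.2⟩ hcon
        rw [hua] at this
        linarith
      have hd : (0:ℝ) < b - v₁ := by linarith
      have hcomb := hconv v₁ ⟨hv₁G.1.1.le, hv₁G.1.2⟩ b ⟨hbI.1.le, hbI.2⟩
        ((b - a)/(b - v₁)) ((a - v₁)/(b - v₁))
        (div_nonneg (by linarith) hd.le) (div_nonneg (by linarith) hd.le)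
        (by field_simp; ring)
      have heqa : (b - a)/(b - v₁) * v₁ + (a - v₁)/(b - v₁) * b = a := by
        field_simp; ring
      rw [heqa, hua, hub] at hcomb
      have hαpos : 0 < (b - a)/(b - v₁) := div_pos (by linarith) hd
      have hβ : (a - v₁)/(b - v₁) = 1 - (b - a)/(b - v₁) := by
        field_simp; ring
      rw [hβ] at hcomb
      nlinarith [hcomb, mul_pos hαpos (sub_pos.2 hγlt)]
    rcases lt_or_gt_of_ne hwne with hlt | hgt
    · exact hfinal w₁ w₂ hw₁.1.1 hw₂.1.1 hlt (hval w₁ hw₁) (hval w₂ hw₂)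
    · exact hfinal w₂ w₁ hw₂.1.1 hw₁.1.1 hgt (hval w₂ hw₂) (hval w₁ hw₁)
  -- `h` never takes the value `⊤`
  push_neg at htop
  -- the finiteness domain of `h` and the real-valued version of `h`
  obtain ⟨T, hT⟩ : ∃ T : Set ℝ, T = {t : ℝ | h t ≠ ⊥} := ⟨_, rfl⟩
  obtain ⟨Hf, hHf⟩ : ∃ Hf : ℝ → ℝ, Hf = fun t => (h t).toReal := ⟨_, rfl⟩
  have hTmem : ∀ t, t ∈ T ↔ h t ≠ ⊥ := fun t => by rw [hT]; exact Iff.rfl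
  have hcoe : ∀ t ∈ T, h t = ((Hf t : ℝ) : EReal) := by
    intro t ht
    rw [hHf]
    exact (EReal.coe_toReal (htop t) ((hTmem t).1 ht)).symm
  have hTconv : ∀ t₁ ∈ T, ∀ t₂ ∈ T, ∀ a b : ℝ, 0 ≤ a → 0 ≤ b → a + b = 1 →
      (a * t₁ + b * t₂) ∈ T ∧ a * Hf t₁ + b * Hf t₂ ≤ Hf (a * t₁ + b * t₂) := by
    intro t₁ ht₁ t₂ ht₂ a b ha hb hab
    have hkey := hconc t₁ t₂ a b ha hb hab
    rw [hcoe t₁ ht₁, hcoe t₂ ht₂, ← EReal.coe_mul, ← EReal.coe_mul, ← EReal.coe_add] at hkey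
    have hg : (a * t₁ + b * t₂) ∈ T := by
      rw [hTmem]
      intro hbot
      rw [hbot] at hkey
      exact (EReal.bot_lt_coe _).not_ge hkey
    refine ⟨hg, ?_⟩
    rw [hcoe _ hg, EReal.coe_le_coe_iff] at hkey
    exact hkey
  have hIccT : ∀ t₁ ∈ T, ∀ t₂ ∈ T, ∀ z, t₁ ≤ z → z ≤ t₂ → z ∈ T := by
    intro t₁ ht₁ t₂ ht₂ z h1 h2
    rcases eq_or_lt_of_le (le_trans h1 h2) with heq | hlt
    · have hz : z = t₁ := le_antisymm (heq ▸ h2) h1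
      rwa [hz]
    have hd : (0:ℝ) < t₂ - t₁ := by linarith
    have hmem := (hTconv t₁ ht₁ t₂ ht₂ ((t₂ - z)/(t₂ - t₁)) ((z - t₁)/(t₂ - t₁))
      (div_nonneg (by linarith) hd.le) (div_nonneg (by linarith) hd.le)
      (by field_simp; ring)).1
    have heqz : (t₂ - z)/(t₂ - t₁) * t₁ + (z - t₁)/(t₂ - t₁) * t₂ = z := by
      field_simp; ring
    rwa [heqz] at hmem
  -- three-point slope inequality of the concave function `Hf` on `T`
  have lem3 : ∀ pp q r : ℝ, pp ∈ T → r ∈ T → pp < q → q < r →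
      (Hf r - Hf q) / (r - q) ≤ (Hf q - Hf pp) / (q - pp) := by
    intro pp q r hp hr h1 h2
    have hd : (0:ℝ) < r - pp := by linarith
    have hcombo := hTconv pp hp r hr ((r - q)/(r - pp)) ((q - pp)/(r - pp))
      (div_nonneg (by linarith) hd.le) (div_nonneg (by linarith) hd.le) (by field_simp; ring)
    have heqq : (r - q)/(r - pp) * pp + (q - pp)/(r - pp) * r = q := by
      field_simp; ring
    rw [heqq] at hcombo
    have h5 := hcombo.2
    rw [div_mul_eq_mul_div, div_mul_eq_mul_div, ← add_div, div_le_iff₀ hd] at h5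
    rw [div_le_div_iff₀ (by linarith) (by linarith)]
    nlinarith [h5]
  -- degenerate case: (essentially) nothing to the right of the crossing point
  by_cases hP2 : μ {v | v ∈ Set.Icc 0 hbar ∧ bb < v} = 0
  · apply heqcase
    have h9 : ∀ᵐ v ∂μ, ¬(v ∈ Set.Icc 0 hbar ∧ bb < v) := measure_eq_zero_iff_ae_notMem.1 hP2
    have hle : ∀ᵐ v ∂μ, u v ≤ L v := by
      filter_upwards [h9, hG] with v hv1 hv2
      have hvI : v ∈ Set.Icc 0 hbar := ⟨hv2.1.1.le, hv2.1.2⟩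
      have hnlt : ¬ bb < v := fun hbv => hv1 ⟨hvI, hbv⟩
      rcases eq_or_lt_of_le (not_lt.1 hnlt) with heq | hlt
      · exact absurd heq hv2.2.2
      · exact hcross₂ v hvI hlt
    have hnn : (0 : ℝ → ℝ) ≤ᵐ[μ] fun v => L v - u v :=
      hle.mono fun v hv => by show (0:ℝ) ≤ L v - u v; linarith
    have hz := (integral_eq_zero_iff_of_nonneg_ae hnn (hLInt.sub huInt)).1
      (by rw [integral_sub hLInt huInt, huc, hLc]; ring)
    filter_upwards [hz] with v hv
    have hv' : L v - u v = 0 := hv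
    linarith
  -- the left side of the crossing point always has positive measure
  have hP1 : μ {v | v ∈ Set.Icc 0 hbar ∧ v < bb} ≠ 0 := by
    intro h0
    have h9 : ∀ᵐ v ∂μ, ¬(v ∈ Set.Icc 0 hbar ∧ v < bb) := measure_eq_zero_iff_ae_notMem.1 h0
    have hgt : ∀ᵐ v ∂μ, 0 < u v - L v := by
      filter_upwards [h9, hG] with v hv1 hv2
      have hvI : v ∈ Set.Icc 0 hbar := ⟨hv2.1.1.le, hv2.1.2⟩
      have hnlt : ¬ v < bb := fun hvb => hv1 ⟨hvI, hvb⟩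
      have hbv : bb < v := lt_of_le_of_ne (not_lt.1 hnlt) (Ne.symm hv2.2.2)
      have := hcross₁ v hvI hbv
      linarith
    have hnn : (0 : ℝ → ℝ) ≤ᵐ[μ] fun v => u v - L v :=
      hgt.mono fun v hv => by show (0:ℝ) ≤ u v - L v; linarith
    have hz := (integral_eq_zero_iff_of_nonneg_ae hnn (huInt.sub hLInt)).1
      (by rw [integral_sub huInt hLInt, huc, hLc]; ring)
    obtain ⟨v, hv1, hv2⟩ := (hz.and hgt).exists
    have hv' : u v - L v = 0 := hv1
    linarith
  -- pick good points on both sides of the crossing point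
  obtain ⟨ws, hwsA, hwsG⟩ := hpick {v | v ∈ Set.Icc 0 hbar ∧ v < bb} hP1
  obtain ⟨vs, hvsA, hvsG⟩ := hpick {v | v ∈ Set.Icc 0 hbar ∧ bb < v} hP2
  have hwsI : ws ∈ Set.Icc 0 hbar := hwsA.1
  have hvsI : vs ∈ Set.Icc 0 hbar := hvsA.1
  have hws_lt : ws < bb := hwsA.2
  have hvs_gt : bb < vs := hvsA.2
  have hwsT : u ws ∈ T := (hTmem _).2 (ne_of_gt hwsG.2.1.1)
  have hvsT : u vs ∈ T := (hTmem _).2 (ne_of_gt hvsG.2.1.1)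
  have hb1 : u ws ≤ L ws := hcross₂ ws hwsI hws_lt
  have hb2 : L ws < L bb := hLmono ws bb hws_lt
  have hb3 : L bb < L vs := hLmono bb vs hvs_gt
  have hb4 : L vs < u vs := hcross₁ vs hvsI hvs_gt
  have htsT : L bb ∈ T := hIccT (u ws) hwsT (u vs) hvsT (L bb) (by linarith) (by linarith)
  -- supergradient slope of `Hf` at `L bb`
  obtain ⟨k, hk⟩ : ∃ k, k = sSup ((fun z => (Hf z - Hf (L bb)) / (z - L bb)) ''
      {z | z ∈ T ∧ L bb < z}) := ⟨_, rfl⟩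
  have hKne : ((fun z => (Hf z - Hf (L bb)) / (z - L bb)) ''
      {z | z ∈ T ∧ L bb < z}).Nonempty :=
    ⟨_, Set.mem_image_of_mem _ (⟨hvsT, by linarith⟩ : u vs ∈ {z | z ∈ T ∧ L bb < z})⟩
  have hKbdd : BddAbove ((fun z => (Hf z - Hf (L bb)) / (z - L bb)) ''
      {z | z ∈ T ∧ L bb < z}) := by
    refine ⟨(Hf (L bb) - Hf (u ws)) / (L bb - u ws), ?_⟩
    rintro y ⟨z, ⟨hzT, hzgt⟩, rfl⟩
    exact lem3 (u ws) (L bb) z hwsT hzT (by linarith) hzgt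
  have hk_ge : ∀ z, z ∈ T → L bb < z → (Hf z - Hf (L bb)) / (z - L bb) ≤ k := by
    intro z hzT hz
    rw [hk]
    exact le_csSup hKbdd (Set.mem_image_of_mem _ ⟨hzT, hz⟩)
  have hk_le : ∀ w, w ∈ T → w < L bb → k ≤ (Hf (L bb) - Hf w) / (L bb - w) := by
    intro w hwT hw
    rw [hk]
    refine csSup_le hKne ?_
    rintro y ⟨z, ⟨hzT, hzgt⟩, rfl⟩
    exact lem3 w (L bb) z hwT hzT hw hzgt
  have hsuper : ∀ z, z ∈ T → Hf z ≤ Hf (L bb) + k * (z - L bb) := by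
    intro z hzT
    rcases lt_trichotomy z (L bb) with hlt | heq | hgt
    · have h5 := hk_le z hzT hlt
      rw [le_div_iff₀ (by linarith)] at h5
      have h6 : k * (z - L bb) = -(k * (L bb - z)) := by ring
      linarith
    · rw [heq]; simp
    · have h5 := hk_ge z hzT hgt
      rw [div_le_iff₀ (by linarith)] at h5
      linarith
  -- pointwise comparison on the good set
  have hptwise : ∀ v, (v ∈ Set.Ioc 0 hbar ∧ (⊥ < h (u v) ∧ h (u v) < ⊤) ∧ v ≠ bb) →
      L v ∈ T ∧ Hf (u v) ≤ Hf (L v) + k * (u v - L v) := by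
    intro v hvG'
    have hvI : v ∈ Set.Icc 0 hbar := ⟨hvG'.1.1.le, hvG'.1.2⟩
    have hvT : u v ∈ T := (hTmem _).2 (ne_of_gt hvG'.2.1.1)
    rcases lt_trichotomy v bb with hlt | heq | hgt
    · have hulv : u v ≤ L v := hcross₂ v hvI hlt
      have hLlt : L v < L bb := hLmono v bb hlt
      have hLT : L v ∈ T := hIccT (u v) hvT (L bb) htsT (L v) hulv hLlt.le
      refine ⟨hLT, ?_⟩
      rcases eq_or_lt_of_le hulv with heq2 | hlt2
      · rw [heq2]; simp
      · have hs1 := lem3 (u v) (L v) (L bb) hvT htsT hlt2 hLlt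
        have hs2 := hk_le (L v) hLT hLlt
        have hs3 : k ≤ (Hf (L v) - Hf (u v)) / (L v - u v) := le_trans hs2 hs1
        rw [le_div_iff₀ (by linarith)] at hs3
        have h6 : k * (u v - L v) = -(k * (L v - u v)) := by ring
        linarith
    · exact absurd heq hvG'.2.2
    · have hLlt : L bb < L v := hLmono bb v hgt
      have hul2 : L v < u v := hcross₁ v hvI hgt
      have hLT : L v ∈ T := hIccT (L bb) htsT (u v) hvT (L v) hLlt.le hul2.le
      refine ⟨hLT, ?_⟩
      have hs1 := lem3 (L bb) (L v) (u v) htsT hvT hLlt hul2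
      have hs2 := hk_ge (L v) hLT hLlt
      have hs3 : (Hf (u v) - Hf (L v)) / (u v - L v) ≤ k := le_trans hs1 hs2
      rw [div_le_iff₀ (by linarith)] at hs3
      linarith
  -- the frontier of `T` within `T` has at most two points
  have hmid : ∀ a3 b3 c3 : ℝ, a3 ∈ T → c3 ∈ T → a3 < b3 → b3 < c3 → b3 ∈ interior T := by
    intro a3 b3 c3 haT hcT h1 h2
    have hsub : Set.Ioo a3 c3 ⊆ T := fun z hz => hIccT a3 haT c3 hcT z hz.1.le hz.2.le
    exact interior_maximal hsub isOpen_Ioo ⟨h1, h2⟩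
  have hfrontier : ∃ s : Set ℝ, (T \ interior T) ⊆ s ∧ s.Finite := by
    by_cases hss : (T \ interior T).Subsingleton
    · exact ⟨T \ interior T, subset_rfl, hss.finite⟩
    · rw [Set.not_subsingleton_iff] at hss
      obtain ⟨p1, hp1, q1, hq1, hpq⟩ := hss
      refine ⟨{p1, q1}, ?_, (Set.finite_singleton q1).insert p1⟩
      intro r hr
      by_contra hrn
      simp only [Set.mem_insert_iff, Set.mem_singleton_iff] at hrn
      push_neg at hrn
      have h3 : ∀ a3 b3 c3 : ℝ, a3 ∈ T \ interior T → b3 ∈ T \ interior T →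
          c3 ∈ T \ interior T → a3 < b3 → b3 < c3 → False := by
        intro a3 b3 c3 ha3 hb3 hc3 h1 h2
        exact hb3.2 (hmid a3 b3 c3 ha3.1 hc3.1 h1 h2)
      rcases lt_trichotomy p1 q1 with h1 | h1 | h1
      · rcases lt_trichotomy r p1 with h2 | h2 | h2
        · exact h3 r p1 q1 hr hp1 hq1 h2 h1
        · exact hrn.1 h2
        · rcases lt_trichotomy r q1 with h4 | h4 | h4
          · exact h3 p1 r q1 hp1 hr hq1 h2 h4
          · exact hrn.2 h4
          · exact h3 p1 q1 r hp1 hq1 hr h1 h4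
      · exact hpq h1
      · rcases lt_trichotomy r q1 with h2 | h2 | h2
        · exact h3 r q1 p1 hr hq1 hp1 h2 h1
        · exact hrn.2 h2
        · rcases lt_trichotomy r p1 with h4 | h4 | h4
          · exact h3 q1 r p1 hq1 hr hp1 h2 h4
          · exact hrn.1 h4
          · exact h3 q1 p1 r hq1 hp1 hr h1 h4
  obtain ⟨Fs, hFsub, hFfin⟩ := hfrontier
  have hLinj : Function.Injective L := by
    intro a3 b3 hab
    rw [hL] at hab
    simp only at hab
    have hm9 : a3 * Y = b3 * Y := by linarith
    exact mul_right_cancel₀ (ne_of_gt hY0) hm9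
  have hpreim : μ (L ⁻¹' Fs) = 0 := by
    have hfin2 : (L ⁻¹' Fs).Finite := hFfin.preimage (fun a _ b _ hab => hLinj hab)
    exact habs (hfin2.measure_zero _)
  have haeC : ∀ᵐ v ∂μ, L v ∈ interior T := by
    have hnm : ∀ᵐ v ∂μ, v ∉ L ⁻¹' Fs := measure_eq_zero_iff_ae_notMem.1 hpreim
    filter_upwards [hG, hnm] with v hv1 hv2
    have hLT := (hptwise v hv1).1
    by_contra hni
    exact hv2 (hFsub ⟨hLT, hni⟩)
  -- measurability of `Hf ∘ L`
  have hCopen : IsOpen (L ⁻¹' interior T) := by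
    have hLcont : Continuous L := by
      rw [hL]; exact (continuous_id.mul continuous_const).sub continuous_const
    exact isOpen_interior.preimage hLcont
  have hTconvex : Convex ℝ T := by
    intro a3 haT b3 hbT a1 b1 ha1 hb1 hab1
    simp only [smul_eq_mul]
    exact (hTconv a3 haT b3 hbT a1 b1 ha1 hb1 hab1).1
  have hintconv : Convex ℝ (interior T) := hTconvex.interior
  have hLaff : ∀ a1 b1 aa bb3 : ℝ, a1 + b1 = 1 →
      L (a1 * aa + b1 * bb3) = a1 * L aa + b1 * L bb3 := by
    intro a1 b1 aa bb3 hab1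
    rw [hL]
    simp only
    linear_combination Q * hab1
  have hCconv : Convex ℝ (L ⁻¹' interior T) := by
    intro aa ha3 bb3 hb3 a1 b1 ha1 hb1 hab1
    simp only [Set.mem_preimage, smul_eq_mul] at *
    rw [hLaff a1 b1 aa bb3 hab1]
    have := hintconv ha3 hb3 ha1 hb1 hab1
    simpa [smul_eq_mul] using this
  have hψconc : ConcaveOn ℝ (L ⁻¹' interior T) (fun v => Hf (L v)) := by
    refine ⟨hCconv, ?_⟩
    intro aa ha3 bb3 hb3 a1 b1 ha1 hb1 hab1
    simp only [Set.mem_preimage, smul_eq_mul] at *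
    rw [hLaff a1 b1 aa bb3 hab1]
    exact (hTconv (L aa) (interior_subset ha3) (L bb3) (interior_subset hb3)
      a1 b1 ha1 hb1 hab1).2
  have hψcont : ContinuousOn (fun v => Hf (L v)) (L ⁻¹' interior T) :=
    hψconc.continuousOn hCopen
  have hrestrict : μ.restrict (L ⁻¹' interior T) = μ :=
    Measure.restrict_eq_self_of_ae_mem (μ := μ) (s := L ⁻¹' interior T)
      (haeC.mono fun v hv => hv)
  have hψmeas : AEStronglyMeasurable (fun v => Hf (L v)) μ := by
    have hh9 : AEMeasurable (fun v => Hf (L v)) (μ.restrict (L ⁻¹' interior T)) :=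
      hψcont.aemeasurable hCopen.measurableSet
    rw [hrestrict] at hh9
    exact hh9.aestronglyMeasurable
  -- integrability of `Hf ∘ L`
  have hHfu_int : Integrable (fun v => Hf (u v)) μ := by rw [hHf]; exact hint
  have hBint : Integrable (fun v => |Hf (u v)| + |k| * |u v - L v| + |Hf (L bb)|
      + |k| * |L v - L bb|) μ :=
    ((hHfu_int.abs.add (((huInt.sub hLInt).abs).const_mul |k|)).add
      (integrable_const _)).add (((hLInt.sub (integrable_const (L bb))).abs).const_mul |k|)
  have hψint : Integrable (fun v => Hf (L v)) μ := by
    refine hBint.mono' hψmeas ?_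
    filter_upwards [hG] with v hv
    obtain ⟨hLT, hineq⟩ := hptwise v hv
    have hup := hsuper (L v) hLT
    have e1 : k * (L v - L bb) ≤ |k| * |L v - L bb| := by
      calc k * (L v - L bb) ≤ |k * (L v - L bb)| := le_abs_self _
        _ = |k| * |L v - L bb| := abs_mul _ _
    have e2 : k * (u v - L v) ≤ |k| * |u v - L v| := by
      have h9 := le_abs_self (k * (u v - L v))
      rw [abs_mul] at h9
      exact h9
    have e3 := le_abs_self (Hf (u v))
    have e4 := neg_abs_le (Hf (u v))
    have e5 := le_abs_self (Hf (L bb))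
    rw [Real.norm_eq_abs, abs_le]
    constructor
    · have hnn1 := abs_nonneg (Hf (L bb))
      have hnn2 := mul_nonneg (abs_nonneg k) (abs_nonneg (L v - L bb))
      linarith
    · have hnn1 := abs_nonneg (Hf (u v))
      have hnn2 := mul_nonneg (abs_nonneg k) (abs_nonneg (u v - L v))
      linarith
  -- conclusion
  have hcond2 : (∀ᵐ v ∂μ, ⊥ < h (L v) ∧ h (L v) < ⊤) ∧
      Integrable (fun v => (h (L v)).toReal) μ := by
    constructor
    · filter_upwards [hG] with v hv
      have hLT := (hptwise v hv).1
      exact ⟨bot_lt_iff_ne_bot.2 ((hTmem _).1 hLT), lt_top_iff_ne_top.2 (htop _)⟩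
    · have hrw9 : (fun v => (h (L v)).toReal) = fun v => Hf (L v) := by rw [hHf]
      rw [hrw9]; exact hψint
  rw [eExp, eExp, if_pos ⟨hfin, hint⟩, if_pos hcond2]
  rw [EReal.coe_le_coe_iff]
  have hgInt : Integrable (fun v => k * (u v - L v)) μ := (huInt.sub hLInt).const_mul k
  have hsum_int : Integrable (fun v => Hf (L v) + k * (u v - L v)) μ := hψint.add hgInt
  have hle2 : ∫ v, (h (u v)).toReal ∂μ ≤ ∫ v, (Hf (L v) + k * (u v - L v)) ∂μ := by
    have hifs : (fun v => (h (u v)).toReal) = fun v => Hf (u v) := by rw [hHf]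
    rw [hifs]
    refine integral_mono_ae hHfu_int hsum_int ?_
    filter_upwards [hG] with v hv
    exact (hptwise v hv).2
  have hre : ∫ v, (Hf (L v) + k * (u v - L v)) ∂μ = ∫ v, (h (L v)).toReal ∂μ := by
    have hrw9 : (fun v => (h (L v)).toReal) = fun v => Hf (L v) := by rw [hHf]
    rw [hrw9, integral_add hψint hgInt, integral_const_mul,
      integral_sub huInt hLInt, huc, hLc, sub_self, mul_zero, add_zero]
  exact le_trans hle2 (le_of_eq hre)
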